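/- Hörmander-condition tail estimate: Let K : ℝⁿ×ℝⁿ → ℂ satisfy ∫_{|x-y|≥2|y-y'|} |K(x,y)-K(x,y')| dx ≤ A' for all y,y' ∈ ℝⁿ. Let b ∈ L¹(ℝⁿ) be supported in a cube Q with center y_Q, ∫_Q b = 0, and ‖b‖_{L¹} ≤ M. Let Q* be the cube with the same center and side length 2√n·ℓ(Q). Then ∫_{ℝⁿ∖Q*} |∫_Q K(x,y) b(y) dy| dx ≤ A'·M. -/

import Mathlib

open MeasureTheory Filter Set Topology ENNReal

noncomputable section
namespace Paper

def cube {n : ℕ} (c : EuclideanSpace ℝ (Fin n)) (ℓ : ℝ) : Set (EuclideanSpace ℝ (Fin n)) :=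
  {x | ∀ i, |x i - c i| ≤ ℓ / 2}

lemma measurableSet_cube {n : ℕ} (c : EuclideanSpace ℝ (Fin n)) (ℓ : ℝ) :
    MeasurableSet (cube c ℓ) := by
  have : cube c ℓ = ⋂ i, {x : EuclideanSpace ℝ (Fin n) | |x i - c i| ≤ ℓ / 2} := by
    ext x; simp [cube]
  rw [this]
  exact MeasurableSet.iInter fun i =>
    measurableSet_le ((((EuclideanSpace.proj (𝕜 := ℝ) i).continuous.measurable).sub_const _).abs)
      measurable_const

lemma norm_le_of_mem_cube {n : ℕ} {c : EuclideanSpace ℝ (Fin n)} {ℓ : ℝ} (hℓ : 0 ≤ ℓ)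
    {y : EuclideanSpace ℝ (Fin n)} (hy : y ∈ cube c ℓ) :
    ‖y - c‖ ≤ Real.sqrt n * (ℓ / 2) := by
  have h1 : ‖y - c‖ = Real.sqrt (∑ i, ‖(y - c) i‖ ^ 2) := EuclideanSpace.norm_eq _
  rw [h1]
  have h2 : (∑ i, ‖(y - c) i‖ ^ 2) ≤ n * (ℓ / 2) ^ 2 := by
    calc (∑ i, ‖(y - c) i‖ ^ 2) ≤ ∑ _i : Fin n, (ℓ / 2) ^ 2 := by
          refine Finset.sum_le_sum fun i _ => ?_
          have : ‖(y - c) i‖ = |y i - c i| := by simp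
          rw [this]
          exact pow_le_pow_left₀ (abs_nonneg _) (hy i) 2
      _ = n * (ℓ / 2) ^ 2 := by simp [Finset.sum_const]
  calc Real.sqrt (∑ i, ‖(y - c) i‖ ^ 2) ≤ Real.sqrt (n * (ℓ / 2) ^ 2) :=
        Real.sqrt_le_sqrt h2
    _ = Real.sqrt n * (ℓ / 2) := by
        rw [Real.sqrt_mul (by positivity)]
        rw [Real.sqrt_sq (by positivity)]

lemma abs_coord_le_norm {n : ℕ} (v : EuclideanSpace ℝ (Fin n)) (i : Fin n) :
    |v i| ≤ ‖v‖ := by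
  rw [EuclideanSpace.norm_eq]
  have : |v i| = Real.sqrt (‖v i‖ ^ 2) := by
    rw [Real.sqrt_sq_eq_abs]; simp
  rw [this]
  apply Real.sqrt_le_sqrt
  exact Finset.single_le_sum (f := fun j => ‖v j‖ ^ 2) (fun j _ => by positivity) (Finset.mem_univ i)

/-- Hörmander-condition tail estimate: if `K` satisfies the Hörmander condition with
constant `A'`, `b` is supported in a cube `Q` (center `y_Q`, side `ℓ`), has vanishing
integral and `‖b‖₁ ≤ M`, then `∫_{ℝⁿ∖Q*} |∫_Q K(x,y) b(y) dy| dx ≤ A' M`, where `Q*` has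
the same center and side `2√n ℓ`. -/
theorem stmt15 (n : ℕ) (hn : 0 < n)
    (K : EuclideanSpace ℝ (Fin n) → EuclideanSpace ℝ (Fin n) → ℂ)
    (hKmeas : Measurable (Function.uncurry K))
    (A' M : ℝ) (hA' : 0 ≤ A') (hM : 0 ≤ M)
    (hK : ∀ y y', ∫⁻ x in {x | 2 * ‖y - y'‖ ≤ ‖x - y‖},
      (‖K x y - K x y'‖₊ : ℝ≥0∞) ∂volume ≤ ENNReal.ofReal A')
    (c : EuclideanSpace ℝ (Fin n)) (ℓ : ℝ) (hℓ : 0 < ℓ)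
    (b : EuclideanSpace ℝ (Fin n) → ℂ) (hb : Integrable b volume)
    (hsupp : Function.support b ⊆ cube c ℓ)
    (hmean : ∫ y, b y ∂volume = 0)
    (hbM : ∫⁻ y, (‖b y‖₊ : ℝ≥0∞) ∂volume ≤ ENNReal.ofReal M) :
    ∫⁻ x in (cube c (2 * Real.sqrt n * ℓ))ᶜ,
        (‖∫ y in cube c ℓ, K x y * b y ∂volume‖₊ : ℝ≥0∞) ∂volume
      ≤ ENNReal.ofReal (A' * M) := by
  set Q := cube c ℓ with hQ
  set Qs := cube c (2 * Real.sqrt n * ℓ) with hQs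
  -- measurable representative of b
  obtain ⟨g, hgm, hgb⟩ : ∃ g, StronglyMeasurable g ∧ b =ᵐ[volume] g :=
    ⟨hb.1.mk b, hb.1.stronglyMeasurable_mk, hb.1.ae_eq_mk⟩
  have hgmeas : Measurable g := hgm.measurable
  -- pointwise bound
  have hpt : ∀ x, (‖∫ y in Q, K x y * b y ∂volume‖₊ : ℝ≥0∞)
      ≤ ∫⁻ y in Q, (‖K x y - K x c‖₊ : ℝ≥0∞) * ‖b y‖₊ ∂volume := by
    intro x
    by_cases hint : IntegrableOn (fun y => K x y * b y) Q volume
    · have hb' : IntegrableOn (fun y => K x c * b y) Q volume :=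
        (hb.integrableOn).const_mul _
      have h0 : ∫ y in Q, b y ∂volume = 0 := by
        rw [setIntegral_eq_integral_of_forall_compl_eq_zero
          (fun y hy => Function.notMem_support.mp (fun h => hy (hsupp h)))]
        exact hmean
      have heq : ∫ y in Q, K x y * b y ∂volume
          = ∫ y in Q, (K x y - K x c) * b y ∂volume := by
        have h2 : ∫ y in Q, (K x y - K x c) * b y ∂volume
            = (∫ y in Q, K x y * b y ∂volume) - ∫ y in Q, K x c * b y ∂volume := by
          simp_rw [sub_mul]
          exact integral_sub hint hb'
        have h3 : ∫ y in Q, K x c * b y ∂volume = 0 := by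
          rw [integral_const_mul, h0, mul_zero]
        rw [h2, h3, sub_zero]
      rw [heq]
      calc (‖∫ y in Q, (K x y - K x c) * b y ∂volume‖₊ : ℝ≥0∞)
          ≤ ∫⁻ y in Q, (‖(K x y - K x c) * b y‖₊ : ℝ≥0∞) ∂volume :=
            enorm_integral_le_lintegral_enorm _
        _ = ∫⁻ y in Q, (‖K x y - K x c‖₊ : ℝ≥0∞) * ‖b y‖₊ ∂volume := by
            simp_rw [nnnorm_mul, ENNReal.coe_mul]
    · rw [integral_undef hint]
      simp
  -- replace b by g
  have hcongr : ∀ x, ∫⁻ y in Q, (‖K x y - K x c‖₊ : ℝ≥0∞) * ‖b y‖₊ ∂volume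
      = ∫⁻ y in Q, (‖K x y - K x c‖₊ : ℝ≥0∞) * ‖g y‖₊ ∂volume := by
    intro x
    refine lintegral_congr_ae (ae_restrict_of_ae ?_)
    filter_upwards [hgb] with y hy
    rw [hy]
  have hgM : ∫⁻ y, (‖g y‖₊ : ℝ≥0∞) ∂volume ≤ ENNReal.ofReal M := by
    refine le_trans (le_of_eq (lintegral_congr_ae ?_)) hbM
    filter_upwards [hgb] with y hy
    rw [hy]
  -- measurability for Tonelli
  have hKm1 : Measurable fun p : EuclideanSpace ℝ (Fin n) × EuclideanSpace ℝ (Fin n) =>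
      ((‖K p.1 p.2 - K p.1 c‖₊ : ℝ≥0∞) * ‖g p.2‖₊) := by
    refine Measurable.mul (f := fun p : EuclideanSpace ℝ (Fin n) × EuclideanSpace ℝ (Fin n) => (‖K p.1 p.2 - K p.1 c‖₊ : ℝ≥0∞)) (g := fun p : EuclideanSpace ℝ (Fin n) × EuclideanSpace ℝ (Fin n) => (‖g p.2‖₊ : ℝ≥0∞)) ?_ ?_
    · exact (hKmeas.sub ((hKmeas.comp (measurable_fst.prodMk measurable_const)))).enorm
    · exact (hgmeas.comp measurable_snd).enorm
  -- geometric inclusion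
  have hgeo : ∀ y ∈ Q, Qsᶜ ⊆ {x : EuclideanSpace ℝ (Fin n) | 2 * ‖c - y‖ ≤ ‖x - c‖} := by
    intro y hy x hx
    have h1 : ‖y - c‖ ≤ Real.sqrt n * (ℓ / 2) := norm_le_of_mem_cube hℓ.le hy
    obtain ⟨i, hi⟩ : ∃ i, ¬ |x i - c i| ≤ (2 * Real.sqrt n * ℓ) / 2 := by
      by_contra h
      push_neg at h
      exact hx h
    push_neg at hi
    have h2 : Real.sqrt n * ℓ < ‖x - c‖ := by
      have := abs_coord_le_norm (x - c) i
      have hxi : |(x - c) i| = |x i - c i| := by simp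
      nlinarith [this, hxi ▸ this]
    have h3 : ‖c - y‖ = ‖y - c‖ := norm_sub_rev _ _
    simp only [Set.mem_setOf_eq]
    rw [h3]
    nlinarith
  -- main chain
  calc ∫⁻ x in Qsᶜ, (‖∫ y in Q, K x y * b y ∂volume‖₊ : ℝ≥0∞) ∂volume
      ≤ ∫⁻ x in Qsᶜ, ∫⁻ y in Q, (‖K x y - K x c‖₊ : ℝ≥0∞) * ‖g y‖₊ ∂volume ∂volume := by
        refine lintegral_mono fun x => ?_
        rw [← hcongr x]
        exact hpt x
    _ = ∫⁻ y in Q, ∫⁻ x in Qsᶜ, (‖K x y - K x c‖₊ : ℝ≥0∞) * ‖g y‖₊ ∂volume ∂volume :=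
        lintegral_lintegral_swap hKm1.aemeasurable
    _ = ∫⁻ y in Q, (‖g y‖₊ : ℝ≥0∞) * ∫⁻ x in Qsᶜ, (‖K x y - K x c‖₊ : ℝ≥0∞) ∂volume ∂volume := by
        refine lintegral_congr fun y => ?_
        have hm : Measurable fun x => ((‖K x y - K x c‖₊ : ℝ≥0∞)) := by
          have h1 : Measurable fun x => K x y :=
            hKmeas.comp (measurable_id.prodMk measurable_const)
          have h2 : Measurable fun x => K x c :=
            hKmeas.comp (measurable_id.prodMk measurable_const)
          exact (h1.sub h2).enorm
        rw [← lintegral_const_mul _ hm]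
        exact lintegral_congr fun x => mul_comm _ _
    _ ≤ ∫⁻ y in Q, (‖g y‖₊ : ℝ≥0∞) * ENNReal.ofReal A' ∂volume := by
        refine lintegral_mono_ae ?_
        filter_upwards [ae_restrict_mem (measurableSet_cube c ℓ)] with y hy
        refine mul_le_mul_right ?_ _
        calc ∫⁻ x in Qsᶜ, (‖K x y - K x c‖₊ : ℝ≥0∞) ∂volume
            = ∫⁻ x in Qsᶜ, (‖K x c - K x y‖₊ : ℝ≥0∞) ∂volume := by
              refine lintegral_congr fun x => ?_
              rw [show K x y - K x c = -(K x c - K x y) by ring, nnnorm_neg]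
          _ ≤ ∫⁻ x in {x | 2 * ‖c - y‖ ≤ ‖x - c‖}, (‖K x c - K x y‖₊ : ℝ≥0∞) ∂volume :=
              lintegral_mono_set (hgeo y hy)
          _ ≤ ENNReal.ofReal A' := hK c y
    _ = ENNReal.ofReal A' * ∫⁻ y in Q, (‖g y‖₊ : ℝ≥0∞) ∂volume := by
        rw [lintegral_mul_const _ (show Measurable fun y => (‖g y‖₊ : ℝ≥0∞) from hgmeas.enorm)]
        ring
    _ ≤ ENNReal.ofReal A' * ENNReal.ofReal M := by
        refine mul_le_mul_right (le_trans ?_ hgM) _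
        exact setLIntegral_le_lintegral _ _
    _ = ENNReal.ofReal (A' * M) := (ENNReal.ofReal_mul hA').symm

end Paper
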